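/- Let (Aₙ) be a sequence of unital C*-algebras each having property (P1). Then the ℓ∞-product l^∞({Aₙ}) = { (aₙ) : aₙ ∈ Aₙ, sup ‖aₙ‖ < ∞ } also has property (P1). -/

import Mathlib

open scoped ENNReal MultiplierAlgebra

/-- An element `b` of a topological ring is *full* if the closure of the two-sided ideal
it generates is the whole ring. -/
def IsFullIn {A : Type*} [NonUnitalNonAssocRing A] [TopologicalSpace A] (b : A) : Prop :=
  closure ((TwoSidedIdeal.span {b} : TwoSidedIdeal A) : Set A) = Set.univ

/-- Property (P1): every full element `b` admits `x, y` with `x * b * y = 1`. -/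
def PropP1 (B : Type*) [Ring B] [TopologicalSpace B] : Prop :=
  ∀ b : B, IsFullIn b → ∃ x y : B, x * b * y = 1

/-- The piecewise-linear function `f_n` : `0` on `[0, 1/(n+1)]`, `1` on `[1/n, ∞)`,
linear in between. -/
noncomputable def fcut (n : ℕ) (t : ℝ) : ℝ := min 1 (max 0 ((n * (n + 1) : ℝ) * t - n))

open scoped NNReal

@[fun_prop]
lemma fcut_cont (n : ℕ) : Continuous (fcut n) := by
  unfold fcut; fun_prop

lemma fcut_nonneg (n : ℕ) (t : ℝ) : 0 ≤ fcut n t := by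
  unfold fcut
  have : (0:ℝ) ≤ max 0 ((n * (n + 1) : ℝ) * t - n) := le_max_left _ _
  exact le_min zero_le_one this

lemma fcut_le_one (n : ℕ) (t : ℝ) : fcut n t ≤ 1 := min_le_left _ _

lemma fcut_mul_aux (n : ℕ) (t : ℝ) : fcut n t * fcut (n+1) t = fcut n t := by
  rcases le_or_gt t (1/((n:ℝ)+1)) with h | h
  · have h0 : fcut n t = 0 := by
      unfold fcut
      have hn : ((n:ℝ) * (n+1)) * t - n ≤ 0 := by
        have hpos : (0:ℝ) < (n:ℝ) + 1 := by positivity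
        have h2 : t * ((n:ℝ)+1) ≤ 1 := (le_div_iff₀ hpos).mp h
        nlinarith
      rw [max_eq_left hn]
      simp
    simp [h0]
  · have h1 : fcut (n+1) t = 1 := by
      unfold fcut
      have hpos : (0:ℝ) < (n:ℝ) + 1 := by positivity
      have ht : 1 < ((n:ℝ)+1) * t := by
        have := (div_lt_iff₀ hpos).mp h
        linarith
      have key : (1:ℝ) ≤ ((n+1:ℕ) * ((n+1:ℕ) + 1) : ℝ) * t - (n+1:ℕ) := by
        push_cast
        nlinarith [ht]
      rw [max_eq_right (by linarith), min_eq_left key]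
    simp [h1]

lemma fcut_one_of_ge (n : ℕ) (hn : 0 < n) (t : ℝ) (ht : 1/(n:ℝ) ≤ t) : fcut n t = 1 := by
  unfold fcut
  have hpos : (0:ℝ) < n := by exact_mod_cast hn
  have ht' : 1 ≤ (n:ℝ) * t := by
    have := (div_le_iff₀ hpos).mp ht
    linarith
  have key : (1:ℝ) ≤ ((n:ℝ) * (n+1)) * t - n := by nlinarith
  rw [max_eq_right (by linarith), min_eq_left key]

lemma fcut_id_diff (n : ℕ) (hn : 0 < n) (t : ℝ) (h0 : 0 ≤ t) (h1 : t ≤ 1) :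
    |t * fcut n t - t| ≤ 1/(n:ℝ) := by
  have hpos : (0:ℝ) < n := by exact_mod_cast hn
  rcases le_or_gt (1/(n:ℝ)) t with h | h
  · rw [fcut_one_of_ge n hn t h, mul_one, sub_self, abs_zero]; positivity
  · have hf0 : 0 ≤ fcut n t := fcut_nonneg n t
    have hf1 : fcut n t ≤ 1 := fcut_le_one n t
    have : t * fcut n t - t ≤ 0 := by nlinarith
    rw [abs_of_nonpos this]
    nlinarith

lemma fcut_le_linear (n : ℕ) (t : ℝ) (h0 : 0 ≤ t) : fcut (n+1) t ≤ ((n:ℝ)+2) * t := by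
  rcases le_or_gt (1/((n:ℝ)+2)) t with h | h
  · have : (1:ℝ) ≤ ((n:ℝ)+2)*t := by
      have h2 := (div_le_iff₀ (show (0:ℝ) < (n:ℝ)+2 by positivity)).mp h
      linarith
    exact le_trans (fcut_le_one _ _) this
  · have hlt : ((n:ℝ)+2) * t < 1 := by
      have h2 := (lt_div_iff₀ (show (0:ℝ) < (n:ℝ)+2 by positivity)).mp h
      linarith
    have : fcut (n+1) t = 0 := by
      unfold fcut
      have : ((n+1:ℕ) * ((n+1:ℕ)+1) : ℝ) * t - (n+1:ℕ) ≤ 0 := by push_cast; nlinarith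
      rw [max_eq_left this]; simp
    rw [this]; positivity

-- list helpers
section lists
variable {α : Type*} {B : Type*} [SeminormedAddCommGroup B]

lemma list_norm_sum_le (l : List α) (f : α → B) {C : ℝ} (hC : 0 ≤ C)
    (h : ∀ x ∈ l, ‖f x‖ ≤ C) : ‖(l.map f).sum‖ ≤ l.length * C := by
  induction l with
  | nil => simp
  | cons a l ih =>
    simp only [List.map_cons, List.sum_cons, List.length_cons]
    calc ‖f a + (l.map f).sum‖ ≤ ‖f a‖ + ‖(l.map f).sum‖ := norm_add_le _ _
    _ ≤ C + l.length * C := add_le_add (h a (by simp)) (ih fun x hx => h x (List.mem_cons_of_mem _ hx))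
    _ = (l.length + 1) * C := by ring
    _ = _ := by push_cast; ring

lemma list_sum_sub (l : List α) (f g : α → B) :
    (l.map f).sum - (l.map g).sum = (l.map fun x => f x - g x).sum := by
  induction l with
  | nil => simp
  | cons a l ih => simp only [List.map_cons, List.sum_cons]; rw [← ih]; abel

lemma list_sum_neg (l : List α) (f : α → B) :
    (l.map fun x => - f x).sum = - (l.map f).sum := by
  induction l with
  | nil => simp
  | cons a l ih => simp only [List.map_cons, List.sum_cons, ih]; abel
end lists

lemma algebraMap_nonneg' {B : Type*} [CStarAlgebra B] [PartialOrder B] [StarOrderedRing B]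
    {r : ℝ} (hr : 0 ≤ r) : (0:B) ≤ algebraMap ℝ B r := by
  have h1 : algebraMap ℝ B r =
      star (algebraMap ℝ B (Real.sqrt r)) * algebraMap ℝ B (Real.sqrt r) := by
    rw [(IsSelfAdjoint.algebraMap B (isSelfAdjoint_iff.mpr rfl)).star_eq,
      ← map_mul, Real.mul_self_sqrt hr]
  rw [h1]
  exact star_mul_self_nonneg _

lemma myConjInv {B : Type*} [CStarAlgebra B] [PartialOrder B] [StarOrderedRing B]
    {q : B} (hq : 0 ≤ q) {r : ℝ} (hr : 0 < r) (hle : algebraMap ℝ B r ≤ q) :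
    ∃ t : B, 0 ≤ t ∧ t * q * t = 1 ∧ ‖t‖ ≤ Real.sqrt r⁻¹ := by
  have hua : IsUnit (algebraMap ℝ B r) := (isUnit_iff_ne_zero.mpr hr.ne').map (algebraMap ℝ B)
  have halg : (0:B) ≤ algebraMap ℝ B r := algebraMap_nonneg' hr.le
  have hqu : IsUnit q := CStarAlgebra.isUnit_of_le _ hle (hua.isStrictlyPositive halg)
  refine ⟨q ^ (-(1/2) : ℝ), CFC.rpow_nonneg, CFC.conjugate_rpow_neg_one_half q (hqu.isStrictlyPositive hq), ?_⟩
  set t := q ^ (-(1/2) : ℝ) with ht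
  have htt : t * t = q ^ (-1 : ℝ) := by
    rw [ht, ← CFC.rpow_add hqu]
    norm_num
  have ht0 : (0:B) ≤ t := CFC.rpow_nonneg
  have hinv_le : q ^ (-1 : ℝ) ≤ algebraMap ℝ B r⁻¹ := by
    lift q to Bˣ using hqu with u
    rw [CFC.rpow_neg_one_eq_inv u hq]
    have hv : ∃ v : Bˣ, (v : B) = algebraMap ℝ B r := ⟨hua.unit, hua.unit_spec⟩
    obtain ⟨v, hv⟩ := hv
    have hvinv : ((v⁻¹ : Bˣ) : B) = algebraMap ℝ B r⁻¹ := by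
      apply Units.inv_eq_of_mul_eq_one_left
      rw [hv, ← map_mul]
      simp [inv_mul_cancel₀ hr.ne']
    calc ((u⁻¹ : Bˣ) : B) ≤ ((v⁻¹ : Bˣ) : B) :=
          CStarAlgebra.inv_le_inv (hv ▸ halg) (hv ▸ hle)
      _ = _ := hvinv
  have hinv0 : (0:B) ≤ q ^ (-1 : ℝ) := CFC.rpow_nonneg
  have hnorm : ‖q ^ (-1:ℝ)‖ ≤ r⁻¹ :=
    (CStarAlgebra.norm_le_iff_le_algebraMap _ (inv_nonneg.mpr hr.le) hinv0).mpr hinv_le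
  have hsq : ‖t‖ * ‖t‖ = ‖q ^ (-1:ℝ)‖ := by
    rw [← CStarRing.norm_star_mul_self (x := t), (IsSelfAdjoint.of_nonneg ht0).star_eq, htt]
  rw [show Real.sqrt r⁻¹ = Real.sqrt r⁻¹ from rfl]
  have : ‖t‖ ^ 2 ≤ r⁻¹ := by rw [sq, hsq]; exact hnorm
  exact (Real.le_sqrt (norm_nonneg _) (by positivity)).mpr this

section helpers
variable {B : Type*} [CStarAlgebra B] [PartialOrder B] [StarOrderedRing B]

lemma smul_mono' {u v : B} (h : u ≤ v) {r : ℝ} (hr : 0 ≤ r) : r • u ≤ r • v := by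
  have key := star_left_conjugate_le_conjugate h (Real.sqrt r • (1:B))
  have hstar : star (Real.sqrt r • (1:B)) = Real.sqrt r • (1:B) := by
    simp [star_smul]
  rw [hstar] at key
  have heq : ∀ z : B, (Real.sqrt r • (1:B)) * z * (Real.sqrt r • (1:B)) = r • z := by
    intro z
    rw [smul_mul_assoc, one_mul, mul_smul_comm, mul_one, smul_smul, Real.mul_self_sqrt hr]
  rwa [heq, heq] at key

lemma alg_le_of_one_le_smul {q : B} {r : ℝ} (hr : 0 < r) (h : (1:B) ≤ r • q) :
    algebraMap ℝ B r⁻¹ ≤ q := by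
  have h2 := smul_mono' h (inv_nonneg.mpr hr.le)
  rwa [smul_smul, inv_mul_cancel₀ hr.ne', one_smul, ← Algebra.algebraMap_eq_smul_one] at h2

end helpers

lemma cut_key {B : Type*} [CStarAlgebra B] [PartialOrder B] [StarOrderedRing B] [Nontrivial B]
    (hB : PropP1 B) {c : B} (hc : 0 ≤ c) (hc1 : ‖c‖ ≤ 1)
    (L : List (B × B)) {K : ℝ} (hK0 : 0 ≤ K)
    (hK : ∀ q ∈ L, ‖q.1‖ * ‖q.2‖ ≤ K)
    (hsum : ‖(L.map fun q => q.1 * c * q.2).sum - 1‖ ≤ 1/2)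
    {N : ℕ} (hN0 : 0 < N) (hNK : (L.length : ℝ) * (K * (1/(N:ℝ))) ≤ 1/4) :
    ∃ w : B, ‖w‖ ≤ Real.sqrt ((N:ℝ)+2) ∧ star w * c * w = 1 := by
  have hc_sa : IsSelfAdjoint c := IsSelfAdjoint.of_nonneg hc
  have hNpos : (0:ℝ) < (N:ℝ) := by exact_mod_cast hN0
  have hspec : ∀ t ∈ spectrum ℝ c, 0 ≤ t ∧ t ≤ 1 := by
    intro t ht
    exact ⟨spectrum_nonneg_of_nonneg hc ht,
      le_trans (Real.le_norm_self t) (le_trans (spectrum.norm_le_norm_of_mem ht) hc1)⟩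
  set e := cfc (fcut N) c with he_def
  have he_sa : IsSelfAdjoint e := cfc_predicate _ c
  -- ‖c * e - c‖ ≤ 1/N
  have hce : c * e - c = cfc (fun t : ℝ => t * fcut N t - t) c := by
    rw [cfc_sub _ _ c (by fun_prop) (by fun_prop),
      cfc_mul _ _ c (by fun_prop) (by fun_prop), cfc_id' ℝ c]
  have hcen : ‖c * e - c‖ ≤ 1/(N:ℝ) := by
    rw [hce]
    exact norm_cfc_le (by positivity) fun t ht => by
      rw [Real.norm_eq_abs]
      exact fcut_id_diff N hN0 t (hspec t ht).1 (hspec t ht).2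
  -- the perturbed sum
  set d := (L.map fun q => q.1 * (c * e) * q.2).sum with hd_def
  have hd1 : ‖d - 1‖ ≤ 3/4 := by
    have hdiff : d - (L.map fun q => q.1 * c * q.2).sum
        = (L.map fun q => q.1 * (c * e - c) * q.2).sum := by
      rw [list_sum_sub]
      congr 1
      apply List.map_congr_left
      intro q _
      rw [mul_sub, sub_mul]
    have hbound : ‖d - (L.map fun q => q.1 * c * q.2).sum‖ ≤ (L.length : ℝ) * (K * (1/(N:ℝ))) := by
      rw [hdiff]
      apply list_norm_sum_le _ _ (by positivity)
      intro q hq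
      calc ‖q.1 * (c * e - c) * q.2‖ ≤ ‖q.1 * (c * e - c)‖ * ‖q.2‖ := norm_mul_le _ _
        _ ≤ (‖q.1‖ * ‖c * e - c‖) * ‖q.2‖ :=
            mul_le_mul_of_nonneg_right (norm_mul_le _ _) (norm_nonneg _)
        _ ≤ K * (1/(N:ℝ)) := by
            have h1 := hK q hq
            have h2 := norm_nonneg q.1
            have h3 := norm_nonneg q.2
            have h4 := norm_nonneg (c * e - c)
            have h5 : (0:ℝ) < 1/(N:ℝ) := by positivity
            nlinarith [mul_le_mul_of_nonneg_left hcen (mul_nonneg h2 h3)]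
    calc ‖d - 1‖ ≤ ‖d - (L.map fun q => q.1 * c * q.2).sum‖
          + ‖(L.map fun q => q.1 * c * q.2).sum - 1‖ := by
          simpa using norm_sub_le_norm_sub_add_norm_sub d _ 1
      _ ≤ 1/4 + 1/2 := add_le_add (hbound.trans hNK) hsum
      _ = 3/4 := by norm_num
  have hdu : IsUnit d := by
    have hlt : ‖1 - d‖ < 1 := by
      rw [norm_sub_rev]
      exact lt_of_le_of_lt hd1 (by norm_num)
    simpa [sub_sub_cancel] using (Units.oneSub (1 - d) hlt).isUnit
  obtain ⟨D, hD⟩ := hdu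
  -- e is full
  have hfull : IsFullIn e := by
    have h1mem : (1:B) ∈ TwoSidedIdeal.span {e} := by
      have h1d : (1:B) = ((D⁻¹ : Bˣ) : B) * d := by rw [← hD, Units.inv_mul]
      have hsum_eq : ((D⁻¹ : Bˣ) : B) * d
          = (L.map fun q => ((D⁻¹ : Bˣ) : B) * (q.1 * (c * e) * q.2)).sum := by
        exact (List.sum_map_mul_left L _ _).symm
      rw [h1d, hsum_eq]
      apply list_sum_mem
      intro z hz
      simp only [List.mem_map] at hz
      obtain ⟨q, hq, rfl⟩ := hz
      have he_mem : e ∈ TwoSidedIdeal.span {e} :=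
        TwoSidedIdeal.subset_span (Set.mem_singleton e)
      have : ((D⁻¹ : Bˣ) : B) * (q.1 * (c * e) * q.2)
          = (((D⁻¹ : Bˣ) : B) * (q.1 * c) * e) * q.2 := by
        simp only [mul_assoc]
      rw [this]
      exact (TwoSidedIdeal.span {e}).mul_mem_right _ _
        ((TwoSidedIdeal.span {e}).mul_mem_left _ _ he_mem)
    have huniv : ((TwoSidedIdeal.span {e} : TwoSidedIdeal B) : Set B) = Set.univ := by
      apply Set.eq_univ_iff_forall.mpr
      intro z
      simpa using (TwoSidedIdeal.span {e}).mul_mem_left z 1 h1mem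
    rw [IsFullIn, huniv, closure_univ]
  obtain ⟨x, y, hxy⟩ := hB e hfull
  -- square root of e
  set s := cfc (fun t => Real.sqrt (fcut N t)) c with hs_def
  have hs_sa : IsSelfAdjoint s := cfc_predicate _ c
  have hss : s * s = e := by
    rw [hs_def, he_def, ← cfc_mul _ _ c (by fun_prop) (by fun_prop)]
    exact cfc_congr fun t _ => Real.mul_self_sqrt (fcut_nonneg N t)
  have hzy : (x * s) * (s * y) = 1 := by
    have h1 : (x * s) * (s * y) = x * (s * s) * y := by simp only [mul_assoc]
    rw [h1, hss]
    exact hxy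
  set z := x * s with hz_def
  set a₀ := s * y with ha₀_def
  have hq0 : (0:B) ≤ star a₀ * a₀ := star_mul_self_nonneg a₀
  have hqe : star a₀ * a₀ = star y * e * y := by
    rw [ha₀_def, star_mul, hs_sa.star_eq, ← hss]
    simp only [mul_assoc]
  have hone : (1:B) = star a₀ * (star z * z) * a₀ := by
    have h2 : star (z * a₀) * (z * a₀) = 1 := by rw [hzy]; simp
    rw [← h2, star_mul]
    simp only [mul_assoc]
  have hle1 : (1:B) ≤ ‖star z * z‖ • (star a₀ * a₀) := by
    calc (1:B) = star a₀ * (star z * z) * a₀ := hone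
      _ ≤ ‖star z * z‖ • (star a₀ * a₀) :=
        CStarAlgebra.star_left_conjugate_le_norm_smul (IsSelfAdjoint.star_mul_self z)
  have hν0 : 0 < ‖star z * z‖ := by
    rcases (norm_nonneg (star z * z)).lt_or_eq with h | h
    · exact h
    · exfalso
      have h10 : (1:B) ≤ 0 := by
        have := hle1
        rw [← h, zero_smul] at this
        exact this
      have h01 : (0:B) ≤ 1 := by simpa using star_mul_self_nonneg (1:B)
      exact one_ne_zero (le_antisymm h10 h01)
  obtain ⟨t₁, ht₁0, ht₁q, -⟩ := myConjInv hq0 (inv_pos.mpr hν0) (alg_le_of_one_le_smul hν0 hle1)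
  set z₂ := y * t₁ with hz₂_def
  have ht₁_sa : star t₁ = t₁ := (IsSelfAdjoint.of_nonneg ht₁0).star_eq
  have hz₂e : star z₂ * e * z₂ = 1 := by
    rw [hz₂_def, star_mul, ht₁_sa]
    calc t₁ * star y * e * (y * t₁) = t₁ * (star y * e * y) * t₁ := by simp only [mul_assoc]
      _ = t₁ * (star a₀ * a₀) * t₁ := by rw [hqe]
      _ = 1 := ht₁q
  set z' := s * z₂ with hz'_def
  have hz'1 : star z' * z' = 1 := by
    rw [hz'_def, star_mul, hs_sa.star_eq]
    calc star z₂ * s * (s * z₂) = star z₂ * (s * s) * z₂ := by simp only [mul_assoc]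
      _ = 1 := by rw [hss]; exact hz₂e
  have hz'norm : ‖z'‖ = 1 := by
    have h2 : ‖z'‖ * ‖z'‖ = 1 := by rw [← CStarRing.norm_star_mul_self, hz'1, norm_one]
    nlinarith [norm_nonneg z']
  set e' := cfc (fcut (N+1)) c with he'_def
  have hse's : s * e' * s = e := by
    rw [hs_def, he'_def, he_def, ← cfc_mul _ _ c (by fun_prop) (by fun_prop),
      ← cfc_mul _ _ c (by fun_prop) (by fun_prop)]
    apply cfc_congr
    intro t _
    show Real.sqrt (fcut N t) * fcut (N+1) t * Real.sqrt (fcut N t) = fcut N t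
    have h1 : Real.sqrt (fcut N t) * fcut (N+1) t * Real.sqrt (fcut N t)
        = (Real.sqrt (fcut N t) * Real.sqrt (fcut N t)) * fcut (N+1) t := by ring
    rw [h1, Real.mul_self_sqrt (fcut_nonneg N t), fcut_mul_aux]
  have hz'e' : star z' * e' * z' = 1 := by
    rw [hz'_def, star_mul, hs_sa.star_eq]
    calc star z₂ * s * e' * (s * z₂) = star z₂ * (s * e' * s) * z₂ := by simp only [mul_assoc]
      _ = 1 := by rw [hse's]; exact hz₂e
  have he'le : e' ≤ ((N:ℝ)+2) • c := by
    have h1 : cfc (fcut (N+1)) c ≤ cfc (fun t : ℝ => ((N:ℝ)+2) * t) c :=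
      cfc_mono (fun t ht => fcut_le_linear N t (hspec t ht).1) (by fun_prop) (by fun_prop)
    have h2 : cfc (fun t : ℝ => ((N:ℝ)+2) * t) c = ((N:ℝ)+2) • c := by
      rw [cfc_const_mul _ _ c (by fun_prop), cfc_id' ℝ c]
    rw [he'_def, ← h2]
    exact h1
  set q₂ := star z' * c * z' with hq₂_def
  have hq₂0 : (0:B) ≤ q₂ := star_left_conjugate_nonneg hc z'
  have h1q₂ : (1:B) ≤ ((N:ℝ)+2) • q₂ := by
    calc (1:B) = star z' * e' * z' := hz'e'.symm
      _ ≤ star z' * (((N:ℝ)+2) • c) * z' := star_left_conjugate_le_conjugate he'le z'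
      _ = ((N:ℝ)+2) • q₂ := by rw [mul_smul_comm, smul_mul_assoc]
  have hN2 : (0:ℝ) < (N:ℝ)+2 := by positivity
  obtain ⟨t₂, ht₂0, ht₂q, ht₂n⟩ :=
    myConjInv hq₂0 (inv_pos.mpr hN2) (alg_le_of_one_le_smul hN2 h1q₂)
  refine ⟨z' * t₂, ?_, ?_⟩
  · calc ‖z' * t₂‖ ≤ ‖z'‖ * ‖t₂‖ := norm_mul_le _ _
      _ ≤ 1 * Real.sqrt ((N:ℝ)+2) := by
          rw [inv_inv] at ht₂n
          exact mul_le_mul (le_of_eq hz'norm) ht₂n (norm_nonneg _) zero_le_one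
      _ = Real.sqrt ((N:ℝ)+2) := one_mul _
  · rw [star_mul, (IsSelfAdjoint.of_nonneg ht₂0).star_eq]
    calc t₂ * star z' * c * (z' * t₂) = t₂ * (star z' * c * z') * t₂ := by simp only [mul_assoc]
      _ = 1 := ht₂q

lemma component_key {B : Type*} [CStarAlgebra B] [Nontrivial B] (hB : PropP1 B)
    {a : B} {R M ε : ℝ} {k N : ℕ} (hR : ‖a‖ ≤ R) (hM0 : 0 ≤ M) (hε : 0 < ε)
    (hε2 : (k:ℝ) * ((M * M) * (Real.sqrt ε / 2)) ≤ 1/4)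
    (hN0 : 0 < N)
    (hNK : (k:ℝ) * (((M * (R+1)) * ((R*R+1) * (ε⁻¹ * M))) * (1/(N:ℝ))) ≤ 1/4)
    (L : List (B × B)) (hk : L.length = k)
    (hMle : ∀ q ∈ L, ‖q.1‖ ≤ M ∧ ‖q.2‖ ≤ M)
    (hsum : ‖(L.map fun q => q.1 * a * q.2).sum - 1‖ ≤ 1/4) :
    ∃ x y : B, ‖x‖ ≤ (R+1) * Real.sqrt ((N:ℝ)+2) ∧ ‖y‖ ≤ Real.sqrt ((N:ℝ)+2)
      ∧ x * a * y = 1 := by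
  letI := CStarAlgebra.spectralOrder B
  haveI := CStarAlgebra.spectralOrderedRing B
  have hR0 : (0:ℝ) ≤ R := le_trans (norm_nonneg a) hR
  set m := star a * a with hm_def
  have hm0 : (0:B) ≤ m := star_mul_self_nonneg a
  have hm_sa : IsSelfAdjoint m := IsSelfAdjoint.of_nonneg hm0
  have hmn : ‖m‖ ≤ R * R := by
    calc ‖star a * a‖ ≤ ‖star a‖ * ‖a‖ := norm_mul_le _ _
      _ = ‖a‖ * ‖a‖ := by rw [norm_star]
      _ ≤ R * R := mul_le_mul hR hR (norm_nonneg a) hR0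
  have hcont1 : ContinuousOn (fun t : ℝ => (t + ε)⁻¹) (spectrum ℝ m) := by
    apply ContinuousOn.inv₀ (Continuous.continuousOn (by fun_prop))
    intro t ht
    have h0 := spectrum_nonneg_of_nonneg hm0 ht
    exact ne_of_gt (by linarith)
  set rε := cfc (fun t : ℝ => (t + ε)⁻¹) m with hrε_def
  have hrεn : ‖rε‖ ≤ ε⁻¹ := by
    apply norm_cfc_le (by positivity)
    intro t ht
    have h0 := spectrum_nonneg_of_nonneg hm0 ht
    rw [Real.norm_eq_abs, abs_of_nonneg (by positivity)]
    exact inv_anti₀ hε (by linarith)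
  set u := 1 - m * rε with hu_def
  have hcont2 : ContinuousOn (fun t : ℝ => t * (t + ε)⁻¹) (spectrum ℝ m) :=
    (continuousOn_id' _).mul hcont1
  have hu_eq : u = cfc (fun t : ℝ => 1 - t * (t + ε)⁻¹) m := by
    rw [cfc_sub _ _ m (continuousOn_const) hcont2,
      cfc_mul _ _ m (continuousOn_id' _) hcont1, cfc_id' ℝ m, cfc_const_one ℝ m]
  have humu : ‖u * m * u‖ ≤ ε/4 := by
    have heq : u * m * u
        = cfc (fun t : ℝ => (1 - t * (t+ε)⁻¹) * t * (1 - t * (t+ε)⁻¹)) m := by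
      rw [cfc_mul (fun t : ℝ => (1 - t * (t+ε)⁻¹) * t) (fun t : ℝ => 1 - t * (t+ε)⁻¹) m ((continuousOn_const.sub hcont2).mul (continuousOn_id' _))
          (continuousOn_const.sub hcont2),
        cfc_mul (fun t : ℝ => 1 - t * (t+ε)⁻¹) (fun t : ℝ => t) m (continuousOn_const.sub hcont2) (continuousOn_id' _),
        cfc_sub _ _ m continuousOn_const hcont2,
        cfc_mul _ _ m (continuousOn_id' _) hcont1, cfc_id' ℝ m, cfc_const_one ℝ m, hu_eq]
      rw [← hu_eq, ← hu_def]
    rw [heq]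
    apply norm_cfc_le (by positivity)
    intro t ht
    have h0 := spectrum_nonneg_of_nonneg hm0 ht
    have hp : (0:ℝ) < t + ε := by linarith
    have heq2 : (1 - t*(t+ε)⁻¹) * t * (1 - t*(t+ε)⁻¹) = ε*ε*t/((t+ε)*(t+ε)) := by
      field_simp
      ring
    rw [Real.norm_eq_abs, heq2, abs_of_nonneg (by positivity), div_le_iff₀ (by positivity)]
    nlinarith [sq_nonneg (t - ε), hε.le, h0]
  have hau : ‖a * u‖ ≤ Real.sqrt ε / 2 := by
    have hu_sa : IsSelfAdjoint u := by rw [hu_eq]; exact cfc_predicate _ m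
    have h1 : star (a * u) * (a * u) = u * m * u := by
      rw [star_mul, hu_sa.star_eq, hm_def]
      simp only [mul_assoc]
    have h2 : ‖a * u‖ * ‖a * u‖ ≤ ε / 4 := by
      rw [← CStarRing.norm_star_mul_self, h1]
      exact humu
    have h3 : ‖a * u‖ ≤ Real.sqrt (ε/4) :=
      (Real.le_sqrt (norm_nonneg _) (by positivity)).mpr (by rw [sq]; exact h2)
    have h4 : Real.sqrt (ε/4) = Real.sqrt ε / 2 := by
      rw [show ε/4 = ε / 2^2 by ring, Real.sqrt_div hε.le,
        Real.sqrt_sq (by norm_num : (0:ℝ) ≤ 2)]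
    rw [← h4]
    exact h3
  have hRR : (0:ℝ) < R*R+1 := by positivity
  set c := (R*R+1)⁻¹ • m with hc_def
  have hc0 : (0:B) ≤ c := by
    have := smul_mono' (B := B) hm0 (r := (R*R+1)⁻¹) (by positivity)
    rwa [smul_zero] at this
  have hc1 : ‖c‖ ≤ 1 := by
    rw [hc_def, norm_smul, Real.norm_eq_abs, abs_of_nonneg (by positivity)]
    have h5 : (R*R+1)⁻¹ * ‖m‖ ≤ (R*R+1)⁻¹ * (R*R+1) :=
      mul_le_mul_of_nonneg_left (by linarith) (by positivity)
    rwa [inv_mul_cancel₀ hRR.ne'] at h5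
  set L₂ := L.map (fun q => (q.1 * a, (R*R+1) • (rε * q.2))) with hL₂_def
  have hlen₂ : L₂.length = k := by rw [hL₂_def, List.length_map, hk]
  have hterm : ∀ q : B × B, (q.1 * a) * c * ((R*R+1) • (rε * q.2))
      = q.1 * (a * (m * rε)) * q.2 := by
    intro q
    rw [hc_def]
    rw [show (q.1 * a) * ((R*R+1)⁻¹ • m) * ((R*R+1) • (rε * q.2))
        = ((R*R+1)⁻¹ * (R*R+1)) • ((q.1 * a) * m * (rε * q.2)) by
      simp only [smul_smul, smul_mul_assoc, mul_smul_comm]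
      rw [mul_comm]]
    rw [inv_mul_cancel₀ hRR.ne', one_smul]
    simp only [mul_assoc]
  have hsum₂pre : (L₂.map fun q => q.1 * c * q.2).sum
      = (L.map fun q => q.1 * (a * (m * rε)) * q.2).sum := by
    rw [hL₂_def, List.map_map]
    congr 1
    apply List.map_congr_left
    intro q _
    exact hterm q
  have hdiff₂ : ‖(L₂.map fun q => q.1 * c * q.2).sum - (L.map fun q => q.1 * a * q.2).sum‖
      ≤ (k:ℝ) * ((M * M) * (Real.sqrt ε / 2)) := by
    rw [hsum₂pre, list_sum_sub, ← hk]
    apply list_norm_sum_le _ _ (by positivity)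
    intro q hq
    have hterm2 : q.1 * (a * (m * rε)) * q.2 - q.1 * a * q.2 = -(q.1 * (a * u) * q.2) := by
      rw [hu_def, mul_sub, mul_one, mul_sub, sub_mul, neg_sub, mul_assoc]
    rw [hterm2, norm_neg]
    obtain ⟨hq1, hq2⟩ := hMle q hq
    calc ‖q.1 * (a * u) * q.2‖ ≤ ‖q.1 * (a * u)‖ * ‖q.2‖ := norm_mul_le _ _
      _ ≤ (‖q.1‖ * ‖a * u‖) * ‖q.2‖ :=
          mul_le_mul_of_nonneg_right (norm_mul_le _ _) (norm_nonneg _)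
      _ ≤ (M * (Real.sqrt ε / 2)) * M :=
          mul_le_mul (mul_le_mul hq1 hau (norm_nonneg _) hM0) hq2 (norm_nonneg _) (by positivity)
      _ = (M * M) * (Real.sqrt ε / 2) := by ring
  have hsum₂ : ‖(L₂.map fun q => q.1 * c * q.2).sum - 1‖ ≤ 1/2 := by
    calc ‖(L₂.map fun q => q.1 * c * q.2).sum - 1‖
        ≤ ‖(L₂.map fun q => q.1 * c * q.2).sum - (L.map fun q => q.1 * a * q.2).sum‖
          + ‖(L.map fun q => q.1 * a * q.2).sum - 1‖ := by
          simpa using norm_sub_le_norm_sub_add_norm_sub _ _ _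
      _ ≤ (k:ℝ) * ((M * M) * (Real.sqrt ε / 2)) + 1/4 := add_le_add hdiff₂ hsum
      _ ≤ 1/4 + 1/4 := add_le_add hε2 le_rfl
      _ = 1/2 := by norm_num
  set K := (M * (R+1)) * ((R*R+1) * (ε⁻¹ * M)) with hK_def
  have hK0 : (0:ℝ) ≤ K := by positivity
  have hK₂ : ∀ q ∈ L₂, ‖q.1‖ * ‖q.2‖ ≤ K := by
    intro q hq
    rw [hL₂_def, List.mem_map] at hq
    obtain ⟨q₀, hq₀, rfl⟩ := hq
    obtain ⟨h1, h2⟩ := hMle q₀ hq₀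
    have hb1 : ‖q₀.1 * a‖ ≤ M * (R+1) := by
      calc ‖q₀.1 * a‖ ≤ ‖q₀.1‖ * ‖a‖ := norm_mul_le _ _
        _ ≤ M * (R+1) := mul_le_mul h1 (by linarith) (norm_nonneg _) hM0
    have hb2 : ‖(R*R+1) • (rε * q₀.2)‖ ≤ (R*R+1) * (ε⁻¹ * M) := by
      rw [norm_smul, Real.norm_eq_abs, abs_of_nonneg hRR.le]
      apply mul_le_mul_of_nonneg_left _ hRR.le
      calc ‖rε * q₀.2‖ ≤ ‖rε‖ * ‖q₀.2‖ := norm_mul_le _ _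
        _ ≤ ε⁻¹ * M := mul_le_mul hrεn h2 (norm_nonneg _) (by positivity)
    exact mul_le_mul hb1 hb2 (norm_nonneg _) (by positivity)
  have hNK₂ : (L₂.length : ℝ) * (K * (1/(N:ℝ))) ≤ 1/4 := by
    rw [hlen₂, hK_def]
    exact hNK
  obtain ⟨w, hwn, hwc⟩ := cut_key hB hc0 hc1 L₂ hK0 hK₂ hsum₂ hN0 hNK₂
  refine ⟨(R*R+1)⁻¹ • (star w * star a), w, ?_, hwn, ?_⟩
  · rw [norm_smul, Real.norm_eq_abs, abs_of_nonneg (by positivity)]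
    have h6 : ‖star w * star a‖ ≤ Real.sqrt ((N:ℝ)+2) * R := by
      calc ‖star w * star a‖ ≤ ‖star w‖ * ‖star a‖ := norm_mul_le _ _
        _ = ‖w‖ * ‖a‖ := by rw [norm_star, norm_star]
        _ ≤ Real.sqrt ((N:ℝ)+2) * R := mul_le_mul hwn hR (norm_nonneg _) (Real.sqrt_nonneg _)
    have h7 : (R*R+1)⁻¹ ≤ 1 := by
      rw [inv_le_one_iff₀]
      right; nlinarith [sq_nonneg R]
    have hs0 : (0:ℝ) ≤ Real.sqrt ((N:ℝ)+2) := Real.sqrt_nonneg _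
    calc (R*R+1)⁻¹ * ‖star w * star a‖ ≤ 1 * (Real.sqrt ((N:ℝ)+2) * R) := by
          apply mul_le_mul h7 h6 (norm_nonneg _) zero_le_one
      _ = Real.sqrt ((N:ℝ)+2) * R := one_mul _
      _ ≤ Real.sqrt ((N:ℝ)+2) * (R+1) := mul_le_mul_of_nonneg_left (by linarith) hs0
      _ = (R+1) * Real.sqrt ((N:ℝ)+2) := mul_comm _ _
  · have h8 : ((R*R+1)⁻¹ • (star w * star a)) * a * w = star w * c * w := by
      rw [hc_def, smul_mul_assoc, smul_mul_assoc, mul_smul_comm, smul_mul_assoc]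
      congr 1
      rw [hm_def]
      simp only [mul_assoc]
    rw [h8, hwc]

/-- Coordinate evaluation as a ring homomorphism on `lp A ∞`. -/
noncomputable def lpEvalHom {A : ℕ → Type*} [∀ n, CStarAlgebra (A n)] [∀ n, Nontrivial (A n)]
    (n : ℕ) : lp A ∞ →+* A n where
  toFun f := (f : ∀ i, A i) n
  map_one' := congrFun lp.infty_coeFn_one n
  map_mul' f g := congrFun (lp.infty_coeFn_mul f g) n
  map_zero' := congrFun (lp.coeFn_zero A ∞) n
  map_add' f g := congrFun (lp.coeFn_add f g) n

/-- the ℓ∞-product of a sequence of unital C*-algebras with property (P1)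
has property (P1). -/
theorem stmt8 {A : ℕ → Type*} [∀ n, CStarAlgebra (A n)] [∀ n, Nontrivial (A n)]
    (hP1 : ∀ n, PropP1 (A n)) : PropP1 (lp A ∞) := by
  intro b hb
  have h1 : (1 : lp A ∞) ∈
      closure ((TwoSidedIdeal.span {b} : TwoSidedIdeal (lp A ∞)) : Set (lp A ∞)) := by
    rw [hb]; trivial
  rw [Metric.mem_closure_iff] at h1
  obtain ⟨z, hz_mem, hz_dist⟩ := h1 (1/4) (by norm_num)
  have hz_mem' : z ∈ TwoSidedIdeal.span {b} := hz_mem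
  rw [TwoSidedIdeal.mem_span_iff_mem_addSubgroup_closure] at hz_mem'
  have hrep : ∃ L : List (lp A ∞ × lp A ∞), z = (L.map fun q => q.1 * b * q.2).sum := by
    clear hz_dist hz_mem
    induction hz_mem' using AddSubgroup.closure_induction with
    | mem x hx =>
      obtain ⟨v, hv, y, -, rfl⟩ := hx
      obtain ⟨x₀, -, b₀, hb₀, rfl⟩ := hv
      rw [Set.mem_singleton_iff] at hb₀
      subst hb₀
      exact ⟨[(x₀, y)], by simp⟩
    | zero => exact ⟨[], by simp⟩
    | add x y hx hy ihx ihy =>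
      obtain ⟨L₁, rfl⟩ := ihx
      obtain ⟨L₂, rfl⟩ := ihy
      exact ⟨L₁ ++ L₂, by rw [List.map_append, List.sum_append]⟩
    | neg x hx ih =>
      obtain ⟨L₁, rfl⟩ := ih
      refine ⟨L₁.map fun q => (-q.1, q.2), ?_⟩
      rw [List.map_map]
      have : ((fun q : lp A ∞ × lp A ∞ => q.1 * b * q.2) ∘ fun q => (-q.1, q.2))
          = fun q : lp A ∞ × lp A ∞ => -(q.1 * b * q.2) := by
        funext q
        simp [Function.comp, neg_mul]
      rw [this, list_sum_neg]
  obtain ⟨L, rfl⟩ := hrep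
  have hsum_lp : ‖(L.map fun q => q.1 * b * q.2).sum - 1‖ ≤ 1/4 := by
    rw [← dist_eq_norm, dist_comm]
    exact hz_dist.le
  set R := ‖b‖ with hR_def
  have hR0 : (0:ℝ) ≤ R := norm_nonneg b
  set k := L.length with hk_def
  set M := (L.map fun q : lp A ∞ × lp A ∞ => ‖q.1‖ + ‖q.2‖).sum + 1 with hM_def
  have hsum_nonneg : (0:ℝ) ≤ (L.map fun q : lp A ∞ × lp A ∞ => ‖q.1‖ + ‖q.2‖).sum :=
    List.sum_nonneg (by
      intro x hx
      rw [List.mem_map] at hx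
      obtain ⟨q, -, rfl⟩ := hx
      positivity)
  have hM0 : (0:ℝ) ≤ M := by rw [hM_def]; linarith
  have hMle_lp : ∀ q ∈ L, ‖q.1‖ ≤ M ∧ ‖q.2‖ ≤ M := by
    intro q hq
    have hmem : ‖q.1‖ + ‖q.2‖ ∈ L.map fun q : lp A ∞ × lp A ∞ => ‖q.1‖ + ‖q.2‖ :=
      List.mem_map_of_mem hq
    have h := List.single_le_sum (l := L.map fun q : lp A ∞ × lp A ∞ => ‖q.1‖ + ‖q.2‖)
      (by
        intro x hx
        rw [List.mem_map] at hx
        obtain ⟨q', -, rfl⟩ := hx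
        positivity) _ hmem
    constructor
    · have := norm_nonneg q.2; rw [hM_def]; linarith
    · have := norm_nonneg q.1; rw [hM_def]; linarith
  set ε := ((2*(k:ℝ)*M*M+1)⁻¹)^2 with hε_def
  have hden : (0:ℝ) < 2*(k:ℝ)*M*M+1 := by positivity
  have hε : 0 < ε := by rw [hε_def]; positivity
  have hsqrtε : Real.sqrt ε = (2*(k:ℝ)*M*M+1)⁻¹ := by
    rw [hε_def, Real.sqrt_sq (by positivity)]
  have hε2 : (k:ℝ) * ((M * M) * (Real.sqrt ε / 2)) ≤ 1/4 := by
    rw [hsqrtε]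
    have heq : (k:ℝ) * ((M * M) * ((2*(k:ℝ)*M*M+1)⁻¹/2))
        = ((k:ℝ)*M*M) / (2*(2*(k:ℝ)*M*M+1)) := by
      field_simp
    rw [heq, div_le_iff₀ (by positivity)]
    have : (0:ℝ) ≤ (k:ℝ)*M*M := by positivity
    linarith
  set K := (M*(R+1)) * ((R*R+1) * (ε⁻¹*M)) with hK_def
  have hK0 : (0:ℝ) ≤ K := by
    rw [hK_def]
    have h1 : (0:ℝ) ≤ ε⁻¹ := inv_nonneg.mpr hε.le
    positivity
  set N := ⌈4*((k:ℝ)*K)⌉₊ + 1 with hN_def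
  have hN0 : 0 < N := Nat.succ_pos _
  have hNcast : 4*((k:ℝ)*K) ≤ (N:ℝ) := by
    have h := Nat.le_ceil (4*((k:ℝ)*K))
    rw [hN_def]
    push_cast
    linarith
  have hNpos : (0:ℝ) < (N:ℝ) := by exact_mod_cast hN0
  have hNK : (k:ℝ) * ((K) * (1/(N:ℝ))) ≤ 1/4 := by
    have heq : (k:ℝ) * (K * (1/(N:ℝ))) = ((k:ℝ)*K)/(N:ℝ) := by ring
    rw [heq, div_le_iff₀ hNpos]
    linarith
  have hcomp : ∀ n, ∃ x y : A n, ‖x‖ ≤ (R+1) * Real.sqrt ((N:ℝ)+2)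
      ∧ ‖y‖ ≤ Real.sqrt ((N:ℝ)+2) ∧ x * ((b : ∀ i, A i) n) * y = 1 := by
    intro n
    set Ln := L.map fun q : lp A ∞ × lp A ∞ =>
      ((q.1 : ∀ i, A i) n, (q.2 : ∀ i, A i) n) with hLn_def
    have hsum_n : ‖(Ln.map fun q => q.1 * ((b : ∀ i, A i) n) * q.2).sum - 1‖ ≤ 1/4 := by
      have hπ : (Ln.map fun q => q.1 * ((b : ∀ i, A i) n) * q.2).sum - 1
          = lpEvalHom n ((L.map fun q => q.1 * b * q.2).sum - 1) := by
        rw [map_sub, map_one, map_list_sum, hLn_def, List.map_map, List.map_map]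
        congr 1
      rw [hπ]
      calc ‖lpEvalHom n ((L.map fun q => q.1 * b * q.2).sum - 1)‖
          ≤ ‖(L.map fun q => q.1 * b * q.2).sum - 1‖ :=
            lp.norm_apply_le_norm (by norm_num) _ n
        _ ≤ 1/4 := hsum_lp
    exact component_key (hP1 n) (lp.norm_apply_le_norm (by norm_num) b n) hM0 hε hε2 hN0
      (by rw [← hK_def]; exact hNK)
      Ln (by rw [hLn_def, List.length_map, hk_def])
      (by
        intro q hq
        rw [hLn_def, List.mem_map] at hq
        obtain ⟨q₀, hq₀, rfl⟩ := hq
        obtain ⟨h1, h2⟩ := hMle_lp q₀ hq₀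
        exact ⟨le_trans (lp.norm_apply_le_norm (by norm_num) q₀.1 n) h1,
          le_trans (lp.norm_apply_le_norm (by norm_num) q₀.2 n) h2⟩)
      hsum_n
  choose xs ys hxs hys hxyeq using hcomp
  have hmx : Memℓp xs ∞ := memℓp_infty ⟨(R+1) * Real.sqrt ((N:ℝ)+2), by
    rintro r ⟨n, rfl⟩
    exact hxs n⟩
  have hmy : Memℓp ys ∞ := memℓp_infty ⟨Real.sqrt ((N:ℝ)+2), by
    rintro r ⟨n, rfl⟩
    exact hys n⟩
  refine ⟨⟨xs, hmx⟩, ⟨ys, hmy⟩, ?_⟩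
  apply lp.ext
  funext n
  have hcoe : ((⟨xs, hmx⟩ : lp A ∞) * b * ⟨ys, hmy⟩ : lp A ∞) =
      ((⟨xs, hmx⟩ : lp A ∞) * b * ⟨ys, hmy⟩ : lp A ∞) := rfl
  calc ((⟨xs, hmx⟩ : lp A ∞) * b * (⟨ys, hmy⟩ : lp A ∞) : lp A ∞) n
      = xs n * ((b : ∀ i, A i) n) * ys n := by
        have h1 := congrFun (lp.infty_coeFn_mul ((⟨xs, hmx⟩ : lp A ∞) * b) (⟨ys, hmy⟩ : lp A ∞)) n
        have h2 := congrFun (lp.infty_coeFn_mul (⟨xs, hmx⟩ : lp A ∞) b) n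
        simp only [Pi.mul_apply] at h1 h2
        rw [h1, h2]
    _ = 1 := hxyeq n
    _ = ((1 : lp A ∞) : ∀ i, A i) n := (congrFun lp.infty_coeFn_one n).symm
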